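/- For every k ≥ 1 and every 1 ≤ i ≤ k, the component E_{i,k+1} defined by the backward recursion admits the closed form E_{i,k+1} = e_{i,k+1}∘S̄_{k+1}; explicitly, E_{k,k+1} = −S_k^{-1}∘𝒫_k∘S̄_{k+1} and, for i ≤ k−1, E_{i,k+1} = −S_i^{-1}∘𝒫_i∘(I_{B̄} − B_{i+1})∘⋯∘(I_{B̄} − B_k)∘S̄_{k+1}. -/
import Mathlib

def auxPi {𝕂 : Type*} [Semiring 𝕂] {B B' : Type*} [AddCommMonoid B] [Module 𝕂 B]
    [AddCommGroup B'] [Module 𝕂 B']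
    (Sb : ℕ → B →ₗ[𝕂] B') (T : ℕ → B' →ₗ[𝕂] B) : ℕ → ℕ → (B' →ₗ[𝕂] B')
  | 0, _ => LinearMap.id
  | (d+1), j => ((LinearMap.id : B' →ₗ[𝕂] B') - (Sb j).comp (T j)).comp (auxPi Sb T d (j+1))

theorem auxPi_right {𝕂 : Type*} [Semiring 𝕂] {B B' : Type*} [AddCommMonoid B] [Module 𝕂 B]
    [AddCommGroup B'] [Module 𝕂 B']
    (Sb : ℕ → B →ₗ[𝕂] B') (T : ℕ → B' →ₗ[𝕂] B) :
    ∀ d j, auxPi Sb T (d+1) j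
      = (auxPi Sb T d j).comp ((LinearMap.id : B' →ₗ[𝕂] B') - (Sb (j+d)).comp (T (j+d))) := by
  intro d
  induction d with
  | zero => intro j; simp [auxPi]
  | succ d ih =>
    intro j
    show ((LinearMap.id : B' →ₗ[𝕂] B') - (Sb j).comp (T j)).comp (auxPi Sb T (d+1) (j+1)) = _
    rw [ih (j+1)]
    show _ = (((LinearMap.id : B' →ₗ[𝕂] B') - (Sb j).comp (T j)).comp (auxPi Sb T d (j+1))).comp _
    rw [LinearMap.comp_assoc]
    ring_nf


theorem stmt_3
    {𝕂 : Type*} [RCLike 𝕂]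
    {B B' : Type*} [AddCommGroup B] [Module 𝕂 B]
    [AddCommGroup B'] [Module 𝕂 B']
    (L : ℕ → B →ₗ[𝕂] B')
    (Sb S : ℕ → B →ₗ[𝕂] B')
    (N Nc : ℕ → Submodule 𝕂 B)
    (R Rc : ℕ → Submodule 𝕂 B')
    (P : ℕ → B' →ₗ[𝕂] B')
    (T : ℕ → B' →ₗ[𝕂] B)
    (E M : ℕ → ℕ → B →ₗ[𝕂] B)
    (hL : ∃ i, L i ≠ 0)
    (hN0 : N 0 = ⊤) (hRc0 : Rc 0 = ⊤)
    (hSb1 : Sb 1 = L 0)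
    (hSbrec : ∀ k, 1 ≤ k → Sb (k + 1) = ∑ i ∈ Finset.Icc 1 k, (L i).comp (M i k))
    (hSdef : ∀ k, S (k + 1) = Sb (k + 1) - ∑ i ∈ Finset.Icc 1 k, (P i).comp (Sb (k + 1)))
    (hNdef : ∀ k, N (k + 1) = LinearMap.ker (S (k + 1)) ⊓ N k)
    (hRdef : ∀ k, R (k + 1) = Submodule.map (S (k + 1)) (N k))
    (hNcompl : ∀ k, Disjoint (Nc (k + 1)) (N (k + 1)) ∧ Nc (k + 1) ⊔ N (k + 1) = N k)
    (hRcompl : ∀ k, Disjoint (R (k + 1)) (Rc (k + 1)) ∧ R (k + 1) ⊔ Rc (k + 1) = Rc k)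
    (hPrange : ∀ i, 1 ≤ i → LinearMap.range (P i) ≤ R i)
    (hPid : ∀ i, 1 ≤ i → ∀ y ∈ R i, P i y = y)
    (hPzeroRc : ∀ i, 1 ≤ i → ∀ y ∈ Rc i, P i y = 0)
    (hPzeroR : ∀ i j, 1 ≤ j → j < i → ∀ y ∈ R j, P i y = 0)
    (hTrange : ∀ i, 1 ≤ i → ∀ y, T i y ∈ Nc i)
    (hTS : ∀ i, 1 ≤ i → ∀ x ∈ Nc i, T i (S i x) = x)
    (hST : ∀ i, 1 ≤ i → ∀ y, S i (T i y) = P i y)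
    (hE11 : E 1 1 = LinearMap.id)
    (hEdiag : ∀ k, E (k + 1) (k + 1) = LinearMap.id)
    (hErec : ∀ k i, 1 ≤ i → i ≤ k →
      E i (k + 1) = -((T i).comp (∑ v ∈ Finset.Icc (i + 1) (k + 1), (Sb v).comp (E v (k + 1)))))
    (hM11 : M 1 1 = LinearMap.id)
    (hM1 : ∀ k, 1 ≤ k → M 1 (k + 1) = E 1 (k + 1))
    (hMrec : ∀ k a, 2 ≤ a → a ≤ k + 1 →
      M a (k + 1) = ∑ b ∈ Finset.Icc (a - 1) k, (M (a - 1) b).comp (E (b + 1) (k + 1)))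
    (e : ℕ → ℕ → B' →ₗ[𝕂] B)
    (heBase : ∀ m, 2 ≤ m → e (m - 1) m = -(T (m - 1)))
    (heStep : ∀ m i, 1 ≤ i → i + 2 ≤ m →
      e i m = (e i (m - 1)).comp ((LinearMap.id : B' →ₗ[𝕂] B') - (Sb (m - 1)).comp (T (m - 1))))
    :
    (∀ k, 1 ≤ k → ∀ i, 1 ≤ i → i ≤ k → E i (k + 1) = (e i (k + 1)).comp (Sb (k + 1))) ∧
    (∀ k, 1 ≤ k → E k (k + 1) = -((T k).comp (Sb (k + 1)))) := by

  -- key sum formula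
  have key : ∀ k, ∀ d i, 1 ≤ i → i + d = k →
      (∑ v ∈ Finset.Icc (i+1) (k+1), (Sb v).comp (E v (k+1)))
        = (auxPi Sb T d (i+1)).comp (Sb (k+1)) := by
    intro k d
    induction d with
    | zero =>
      intro i hi hik
      have hik' : i = k := by omega
      subst hik'
      rw [Finset.Icc_self, Finset.sum_singleton, hEdiag]
      simp [auxPi]
    | succ d ih =>
      intro i hi hik
      have hsum := ih (i+1) (by omega) (by omega)
      have hE := hErec k (i+1) (by omega) (by omega)
      rw [hsum] at hE
      have hsplit : Finset.Icc (i+1) (k+1) = insert (i+1) (Finset.Icc (i+1+1) (k+1)) := by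
        ext x; simp only [Finset.mem_Icc, Finset.mem_insert]; omega
      rw [hsplit, Finset.sum_insert (by simp only [Finset.mem_Icc]; omega), hsum, hE]
      show _ = (((LinearMap.id : B' →ₗ[𝕂] B') - (Sb (i+1)).comp (T (i+1))).comp
        (auxPi Sb T d (i+1+1))).comp (Sb (k+1))
      ext x
      simp [LinearMap.sub_comp]
      abel
  have hA : ∀ d i, 1 ≤ i → e i (i+1+d) = -((T i).comp (auxPi Sb T d (i+1))) := by
    intro d
    induction d with
    | zero =>
      intro i hi
      have hb := heBase (i+1) (by omega)
      simp only [Nat.add_sub_cancel] at hb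
      simp [auxPi, hb]
    | succ d ih =>
      intro i hi
      have hstep := heStep (i+1+(d+1)) i hi (by omega)
      rw [show i+1+(d+1)-1 = i+1+d from by omega] at hstep
      rw [hstep, ih i hi, auxPi_right]
      rw [LinearMap.neg_comp, LinearMap.comp_assoc]
  constructor
  · intro k hk i hi hik
    obtain ⟨d, hd⟩ : ∃ d, i + d = k := ⟨k - i, by omega⟩
    have hA' := hA d i hi
    rw [show i+1+d = k+1 from by omega] at hA'
    rw [hErec k i hi hik, key k d i hi hd, hA', LinearMap.neg_comp, LinearMap.comp_assoc]
  · intro k hk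
    rw [hErec k k hk le_rfl, Finset.Icc_self, Finset.sum_singleton, hEdiag,
      LinearMap.comp_id]
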